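/- Let 𝔊 be a Lie superalgebra over a field k of characteristic ≠ 2 such that the even part 𝔊₀ is a simple Lie algebra. If V₁ and V₂ are 𝔊₀-submodules of the odd part 𝔊₁ such that [V₁, V₂] = 0 and [V₁, V₁] ≠ 0, then V₂ is a trivial 𝔊₀-module. -/
import Mathlib


/-- Let 𝔊 be a Lie superalgebra over a field k of characteristic ≠ 2 such that the
even part 𝔊₀ is a simple Lie algebra. If `V₁`, `V₂` are submodules of the odd part with
`[V₁, V₂] = 0` and `[V₁, V₁] ≠ 0`, then `V₂` is a trivial module. -/
theorem stmt1 {k L M : Type} [Field k] (hchar : ringChar k ≠ 2)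
    [LieRing L] [LieAlgebra k L]
    [AddCommGroup M] [Module k M] [LieRingModule L M] [LieModule k L M]
    (hsimple : LieAlgebra.IsSimple k L)
    (br : M →ₗ[k] M →ₗ[k] L)
    (hsymm : ∀ x y : M, br x y = br y x)
    (hequiv : ∀ (g : L) (x y : M), ⁅g, br x y⁆ = br ⁅g, x⁆ y + br x ⁅g, y⁆)
    (hjacobi : ∀ x y z : M, ⁅br x y, z⁆ + ⁅br y z, x⁆ + ⁅br z x, y⁆ = 0)
    (V₁ V₂ : Submodule k M)
    (hV₁ : ∀ (g : L), ∀ x ∈ V₁, ⁅g, x⁆ ∈ V₁)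
    (hV₂ : ∀ (g : L), ∀ x ∈ V₂, ⁅g, x⁆ ∈ V₂)
    (horth : ∀ x ∈ V₁, ∀ y ∈ V₂, br x y = 0)
    (hnonzero : ∃ x ∈ V₁, ∃ y ∈ V₁, br x y ≠ 0) :
    ∀ (g : L), ∀ x ∈ V₂, ⁅g, x⁆ = 0 := by
  classical
  set gens : Set L := {z | ∃ x ∈ V₁, ∃ y ∈ V₁, br x y = z} with hgens
  set S : Submodule k L := Submodule.span k gens with hS
  have hlie : ∀ (g : L), ∀ m ∈ S, ⁅g, m⁆ ∈ S := by
    intro g m hm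
    induction hm using Submodule.span_induction with
    | mem z hz =>
      obtain ⟨x, hx, y, hy, rfl⟩ := hz
      rw [hequiv]
      exact add_mem (Submodule.subset_span ⟨_, hV₁ g x hx, _, hy, rfl⟩)
        (Submodule.subset_span ⟨_, hx, _, hV₁ g y hy, rfl⟩)
    | zero => simpa using (Submodule.zero_mem S)
    | add a b _ _ ha hb => rw [lie_add]; exact add_mem ha hb
    | smul c a _ ha => rw [lie_smul]; exact Submodule.smul_mem _ _ ha
  let I : LieIdeal k L :=
    { S with lie_mem := fun {g} {m} hm => hlie g m hm }
  have hmemI : ∀ z, z ∈ I ↔ z ∈ S := fun z => Iff.rfl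
  have hItop : I = ⊤ := by
    rcases hsimple.eq_bot_or_eq_top I with hbot | htop
    · exfalso
      obtain ⟨x, hx, y, hy, hne⟩ := hnonzero
      have : br x y ∈ I := Submodule.subset_span ⟨_, hx, _, hy, rfl⟩
      rw [hbot] at this
      exact hne (by simpa using this)
    · exact htop
  intro g v hv
  have hg : g ∈ S := by
    have : g ∈ I := by rw [hItop]; trivial
    exact this
  induction hg using Submodule.span_induction with
  | mem z hz =>
    obtain ⟨x, hx, y, hy, rfl⟩ := hz
    have hj := hjacobi x y v
    have h1 : br y v = 0 := horth y hy v hv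
    have h2 : br v x = 0 := by rw [hsymm]; exact horth x hx v hv
    rw [h1, h2] at hj
    simpa using hj
  | zero => simp
  | add a b _ _ ha hb => rw [add_lie, ha, hb, add_zero]
  | smul c a _ ha => rw [smul_lie, ha, smul_zero]
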